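/- If ρ and σ are density operators with (1/2)‖ρ - σ‖₁ ≤ ε ≤ 1 on a Hilbert space of dimension d, then |H(ρ) - H(σ)| ≤ ε log d + h(ε), where h(ε) = -ε log ε - (1-ε) log(1-ε) is the binary entropy (Fannes–Audenaert continuity bound, Fannes version acceptable: |H(ρ)-H(σ)| ≤ 2ε log d + h(2ε) for ε ≤ 1/(2e)). -/

import Mathlib

set_option linter.unusedSectionVars false


open Matrix Kronecker Finset
open scoped ComplexOrder

noncomputable section

namespace QRelay

variable {n : Type*} [Fintype n] [DecidableEq n]

/-- Von Neumann entropy (in bits) of a matrix, via its eigenvalues when Hermitian. -/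
def vN (ρ : Matrix n n ℂ) : ℝ :=
  if h : ρ.IsHermitian then -∑ i, h.eigenvalues i * Real.logb 2 (h.eigenvalues i) else 0

/-- A density operator: positive semidefinite with unit trace. -/
def IsDensity (ρ : Matrix n n ℂ) : Prop := ρ.PosSemidef ∧ ρ.trace = 1

/-- Trace norm: the sum of singular values. -/
def trNorm (X : Matrix n n ℂ) : ℝ :=
  ∑ i, Real.sqrt ((Matrix.posSemidef_conjTranspose_mul_self X).1.eigenvalues i)

/-- Partial trace over the first tensor factor. -/
def ptrFst {A B : Type*} [Fintype A] [Fintype B] (ρ : Matrix (A × B) (A × B) ℂ) :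
    Matrix B B ℂ :=
  Matrix.of fun b b' => ∑ a, ρ (a, b) (a, b')

/-- Partial trace over the second tensor factor. -/
def ptrSnd {A B : Type*} [Fintype A] [Fintype B] (ρ : Matrix (A × B) (A × B) ℂ) :
    Matrix A A ℂ :=
  Matrix.of fun a a' => ∑ b, ρ (a, b) (a', b)

/-- Binary entropy (base 2). -/
def binEnt (ε : ℝ) : ℝ := -(ε * Real.logb 2 ε) - (1 - ε) * Real.logb 2 (1 - ε)

end QRelay

namespace FAx

variable {n : Type*} [Fintype n] [DecidableEq n]

/-! ### Classical lemmas -/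

lemma negMulLog_add_le {x y : ℝ} (hx : 0 ≤ x) (hy : 0 ≤ y) :
    Real.negMulLog (x + y) ≤ Real.negMulLog x + Real.negMulLog y := by
  rcases eq_or_lt_of_le hx with h | hx'
  · simp [← h]
  rcases eq_or_lt_of_le hy with h | hy'
  · simp [← h]
  have hxy : (0:ℝ) < x + y := by linarith
  simp only [Real.negMulLog, neg_mul]
  have h1 : x * Real.log x ≤ x * Real.log (x + y) :=
    mul_le_mul_of_nonneg_left (Real.log_le_log hx' (by linarith)) hx
  have h2 : y * Real.log y ≤ y * Real.log (x + y) :=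
    mul_le_mul_of_nonneg_left (Real.log_le_log hy' (by linarith)) hy
  nlinarith [add_mul x y (Real.log (x+y))]

lemma sum_negMulLog_nonneg {p : n → ℝ} (h0 : ∀ i, 0 ≤ p i) (h1 : ∑ i, p i = 1) :
    0 ≤ ∑ i, Real.negMulLog (p i) := by
  refine Finset.sum_nonneg fun i _ => Real.negMulLog_nonneg (h0 i) ?_
  calc p i ≤ ∑ j, p j := Finset.single_le_sum (fun j _ => h0 j) (mem_univ i)
    _ = 1 := h1

lemma sum_negMulLog_le_log_card {p : n → ℝ} (h0 : ∀ i, 0 ≤ p i) (h1 : ∑ i, p i = 1) :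
    ∑ i, Real.negMulLog (p i) ≤ Real.log (Fintype.card n) := by
  have hne : Nonempty n := by
    by_contra h
    simp [not_nonempty_iff.mp h] at h1
  have hd : (0:ℝ) < Fintype.card n := by
    exact_mod_cast Fintype.card_pos_iff.mpr hne
  set d : ℝ := (Fintype.card n : ℝ) with hdd
  have key : ∀ i, Real.negMulLog (p i) ≤ p i * Real.log d + (1/d - p i) := by
    intro i
    rcases eq_or_lt_of_le (h0 i) with h | hpi
    · simp [← h, Real.negMulLog]
      positivity
    · have hu : 0 < p i * d := by positivity
      have := Real.add_one_le_exp (Real.log (1/(p i * d)))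
      rw [Real.exp_log (by positivity)] at this
      have hlog : Real.log (1/(p i * d)) ≤ 1/(p i * d) - 1 := by linarith
      rw [Real.log_div one_ne_zero (ne_of_gt hu), Real.log_one,
        Real.log_mul (ne_of_gt hpi) (ne_of_gt hd)] at hlog
      have := mul_le_mul_of_nonneg_left hlog (le_of_lt hpi)
      simp only [Real.negMulLog, neg_mul]
      have hpd : p i * (1/(p i * d) - 1) = 1/d - p i := by
        field_simp
      nlinarith
  calc ∑ i, Real.negMulLog (p i) ≤ ∑ i, (p i * Real.log d + (1/d - p i)) :=
        Finset.sum_le_sum fun i _ => key i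
    _ = (∑ i, p i) * Real.log d + (Fintype.card n * (1/d) - ∑ i, p i) := by
        rw [Finset.sum_add_distrib, Finset.sum_sub_distrib, ← Finset.sum_mul]
        simp [Finset.sum_const, mul_comm]
    _ = Real.log d := by
        rw [h1]
        field_simp
        rw [← hdd]; ring

/-- Classical Fannes–Audenaert inequality (one-sided). -/
lemma classical_key {p q : n → ℝ} (hp0 : ∀ i, 0 ≤ p i) (hp1 : ∑ i, p i = 1)
    (hq0 : ∀ i, 0 ≤ q i) (hq1 : ∑ i, q i = 1) {ε : ℝ}
    (hd : ∑ i, |p i - q i| ≤ 2 * ε) (hε1 : ε ≤ 1) :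
    ∑ i, Real.negMulLog (p i) - ∑ i, Real.negMulLog (q i)
      ≤ ε * Real.log (Fintype.card n) + (Real.negMulLog ε + Real.negMulLog (1 - ε)) := by
  have habs : 0 ≤ ∑ i, |p i - q i| := Finset.sum_nonneg fun i _ => abs_nonneg _
  have hε0 : 0 ≤ ε := by linarith
  rcases eq_or_lt_of_le hε1 with h1 | h1
  · -- ε = 1
    subst h1
    simp only [sub_self, Real.negMulLog_one, Real.negMulLog_zero, add_zero, zero_add, one_mul]
    have := sum_negMulLog_le_log_card hp0 hp1
    have := sum_negMulLog_nonneg hq0 hq1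
    linarith
  -- now ε < 1
  set s := ∑ i, min (p i) (q i) with hs_def
  have hmin : ∀ i, min (p i) (q i) = (p i + q i - |p i - q i|) / 2 := by
    intro i
    rcases le_total (p i) (q i) with h | h
    · rw [min_eq_left h, abs_of_nonpos (by linarith)]; ring
    · rw [min_eq_right h, abs_of_nonneg (by linarith)]; ring
  have hs : s = 1 - (1/2) * ∑ i, |p i - q i| := by
    rw [hs_def]
    rw [Finset.sum_congr rfl fun i _ => hmin i]
    rw [← Finset.sum_div, Finset.sum_sub_distrib, Finset.sum_add_distrib, hp1, hq1]
    ring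
  have hsε : 1 - ε ≤ s := by rw [hs]; linarith
  have hs0 : 0 < s := lt_of_lt_of_le (by linarith) hsε
  set c := (1 - ε) / s with hc_def
  have hc0 : 0 ≤ c := div_nonneg (by linarith) hs0.le
  have hc1 : c ≤ 1 := (div_le_one hs0).mpr hsε
  set r := fun i => c * min (p i) (q i) with hr_def
  have hr0 : ∀ i, 0 ≤ r i := fun i =>
    mul_nonneg hc0 (le_min (hp0 i) (hq0 i))
  have hrp : ∀ i, r i ≤ p i := fun i =>
    (mul_le_of_le_one_left (le_min (hp0 i) (hq0 i)) hc1).trans (min_le_left _ _)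
  have hrq : ∀ i, r i ≤ q i := fun i =>
    (mul_le_of_le_one_left (le_min (hp0 i) (hq0 i)) hc1).trans (min_le_right _ _)
  have hrsum : ∑ i, r i = 1 - ε := by
    rw [hr_def, ← Finset.mul_sum, ← hs_def, hc_def, div_mul_cancel₀]
    exact hs0.ne'
  set a := fun i => p i - r i with ha_def
  set b := fun i => q i - r i with hb_def
  have ha0 : ∀ i, 0 ≤ a i := fun i => sub_nonneg.mpr (hrp i)
  have hb0 : ∀ i, 0 ≤ b i := fun i => sub_nonneg.mpr (hrq i)
  have hasum : ∑ i, a i = ε := by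
    rw [ha_def]; rw [Finset.sum_sub_distrib, hp1, hrsum]; ring
  have hbsum : ∑ i, b i = ε := by
    rw [hb_def]; rw [Finset.sum_sub_distrib, hq1, hrsum]; ring
  rcases eq_or_lt_of_le hε0 with h0 | h0
  · -- ε = 0
    have hpq : ∀ i, p i = q i := by
      intro i
      have hai : a i = 0 :=
        (Finset.sum_eq_zero_iff_of_nonneg (fun i _ => ha0 i)).mp
          (by rw [hasum, ← h0]) i (mem_univ i)
      have hbi : b i = 0 :=
        (Finset.sum_eq_zero_iff_of_nonneg (fun i _ => hb0 i)).mp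
          (by rw [hbsum, ← h0]) i (mem_univ i)
      have := sub_eq_zero.mp hai
      have := sub_eq_zero.mp hbi
      simp only [ha_def, hb_def] at *
      linarith
    have : ∑ i, Real.negMulLog (p i) = ∑ i, Real.negMulLog (q i) :=
      Finset.sum_congr rfl fun i _ => by rw [hpq i]
    rw [this, ← h0]
    simp
  -- 0 < ε < 1
  have h1ε : 0 < 1 - ε := by linarith
  set abar := fun i => a i / ε with habar_def
  set bbar := fun i => b i / ε with hbbar_def
  set rbar := fun i => r i / (1 - ε) with hrbar_def
  have habar0 : ∀ i, 0 ≤ abar i := fun i => div_nonneg (ha0 i) hε0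
  have hbbar0 : ∀ i, 0 ≤ bbar i := fun i => div_nonneg (hb0 i) hε0
  have hrbar0 : ∀ i, 0 ≤ rbar i := fun i => div_nonneg (hr0 i) h1ε.le
  have habar1 : ∑ i, abar i = 1 := by
    rw [habar_def, ← Finset.sum_div, hasum, div_self h0.ne']
  have hbbar1 : ∑ i, bbar i = 1 := by
    rw [hbbar_def, ← Finset.sum_div, hbsum, div_self h0.ne']
  have hrbar1 : ∑ i, rbar i = 1 := by
    rw [hrbar_def, ← Finset.sum_div, hrsum, div_self h1ε.ne']
  have hHp : ∑ i, Real.negMulLog (p i)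
      ≤ ∑ i, Real.negMulLog (r i) + ∑ i, Real.negMulLog (a i) := by
    rw [← Finset.sum_add_distrib]
    refine Finset.sum_le_sum fun i _ => ?_
    have : p i = r i + a i := by simp [ha_def]
    rw [this]
    exact negMulLog_add_le (hr0 i) (ha0 i)
  have hmulA : ∑ i, Real.negMulLog (a i)
      = Real.negMulLog ε + ε * ∑ i, Real.negMulLog (abar i) := by
    have : ∀ i, Real.negMulLog (a i)
        = abar i * Real.negMulLog ε + ε * Real.negMulLog (abar i) := by
      intro i
      have hai : a i = ε * abar i := by
        rw [habar_def]; field_simp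
      rw [hai, Real.negMulLog_mul]
    rw [Finset.sum_congr rfl fun i _ => this i, Finset.sum_add_distrib,
      ← Finset.sum_mul, habar1, one_mul, ← Finset.mul_sum]
  have hmulR : ∑ i, Real.negMulLog (r i)
      = Real.negMulLog (1 - ε) + (1 - ε) * ∑ i, Real.negMulLog (rbar i) := by
    have : ∀ i, Real.negMulLog (r i)
        = rbar i * Real.negMulLog (1 - ε) + (1 - ε) * Real.negMulLog (rbar i) := by
      intro i
      have hri : r i = (1 - ε) * rbar i := by
        rw [hrbar_def]; field_simp
      rw [hri, Real.negMulLog_mul]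
    rw [Finset.sum_congr rfl fun i _ => this i, Finset.sum_add_distrib,
      ← Finset.sum_mul, hrbar1, one_mul, ← Finset.mul_sum]
  have hHq : (1 - ε) * ∑ i, Real.negMulLog (rbar i) + ε * ∑ i, Real.negMulLog (bbar i)
      ≤ ∑ i, Real.negMulLog (q i) := by
    rw [Finset.mul_sum, Finset.mul_sum, ← Finset.sum_add_distrib]
    refine Finset.sum_le_sum fun i _ => ?_
    have hqi : q i = (1 - ε) * rbar i + ε * bbar i := by
      rw [hrbar_def, hbbar_def]; field_simp; ring
    rw [hqi]
    have := Real.concaveOn_negMulLog.2 (Set.mem_Ici.mpr (hrbar0 i))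
      (Set.mem_Ici.mpr (hbbar0 i)) h1ε.le hε0 (by ring)
    simpa [smul_eq_mul] using this
  have hHabar : ∑ i, Real.negMulLog (abar i) ≤ Real.log (Fintype.card n) :=
    sum_negMulLog_le_log_card habar0 habar1
  have hHbbar : 0 ≤ ∑ i, Real.negMulLog (bbar i) :=
    sum_negMulLog_nonneg hbbar0 hbbar1
  have h5 : ε * ∑ i, Real.negMulLog (abar i) ≤ ε * Real.log (Fintype.card n) :=
    mul_le_mul_of_nonneg_left hHabar hε0
  nlinarith [mul_nonneg hε0 hHbbar]

/-! ### Quantum pinching lemmas -/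

lemma conj_diag_entry (C : Matrix n n ℂ) (μ : n → ℝ) (i : n) :
    (C * Matrix.diagonal (Complex.ofReal ∘ μ) * Cᴴ) i i
      = Complex.ofReal (∑ k, μ k * Complex.normSq (C i k)) := by
  rw [Matrix.mul_apply]
  simp only [Matrix.mul_diagonal, Matrix.conjTranspose_apply, Function.comp_apply]
  push_cast
  refine Finset.sum_congr rfl fun j _ => ?_
  rw [RCLike.star_def]
  rw [show C i j * (μ j : ℂ) * (starRingEnd ℂ) (C i j)
      = (μ j : ℂ) * (C i j * (starRingEnd ℂ) (C i j)) by ring]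
  rw [Complex.mul_conj]

lemma unitary_row_sum {C : Matrix n n ℂ} (hC : C * Cᴴ = 1) (i : n) :
    ∑ k, Complex.normSq (C i k) = 1 := by
  have h := congr_fun (congr_fun hC i) i
  simp only [Matrix.mul_apply, Matrix.conjTranspose_apply, Matrix.one_apply_eq] at h
  have : (Complex.ofReal (∑ k, Complex.normSq (C i k))) = 1 := by
    push_cast
    rw [← h]
    refine Finset.sum_congr rfl fun j _ => ?_
    rw [RCLike.star_def, Complex.mul_conj]
  exact_mod_cast this

lemma unitary_col_sum {C : Matrix n n ℂ} (hC : Cᴴ * C = 1) (k : n) :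
    ∑ i, Complex.normSq (C i k) = 1 := by
  have h := congr_fun (congr_fun hC k) k
  simp only [Matrix.mul_apply, Matrix.conjTranspose_apply, Matrix.one_apply_eq] at h
  have : (Complex.ofReal (∑ i, Complex.normSq (C i k))) = 1 := by
    push_cast
    rw [← h]
    refine Finset.sum_congr rfl fun j _ => ?_
    rw [RCLike.star_def, mul_comm, Complex.mul_conj]
  exact_mod_cast this

/-- Real parts of the diagonal of `Uᴴ A U`. -/
def pdiag (A : Matrix n n ℂ) (U : Matrix n n ℂ) : n → ℝ := fun i => ((star U * A * U) i i).re

lemma pdiag_sub (A B U : Matrix n n ℂ) (i : n) :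
    pdiag (A - B) U i = pdiag A U i - pdiag B U i := by
  simp only [pdiag, Matrix.mul_sub, Matrix.sub_mul, Matrix.sub_apply, Complex.sub_re]

/-- Representation of `pdiag` through a doubly stochastic matrix of weights. -/
lemma pdiag_repr {A : Matrix n n ℂ} (hA : A.IsHermitian) {U : Matrix n n ℂ}
    (hU : U ∈ Matrix.unitaryGroup n ℂ) :
    ∃ w : n → n → ℝ, (∀ i k, 0 ≤ w i k) ∧ (∀ i, ∑ k, w i k = 1) ∧ (∀ k, ∑ i, w i k = 1) ∧
      (∀ i, pdiag A U i = ∑ k, hA.eigenvalues k * w i k) := by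
  set V : Matrix n n ℂ := (hA.eigenvectorUnitary : Matrix n n ℂ) with hV_def
  have hV1 : V * star V = 1 := Matrix.mem_unitaryGroup_iff.mp hA.eigenvectorUnitary.2
  have hV2 : star V * V = 1 := Matrix.mem_unitaryGroup_iff'.mp hA.eigenvectorUnitary.2
  have hU1 : U * star U = 1 := Matrix.mem_unitaryGroup_iff.mp hU
  have hU2 : star U * U = 1 := Matrix.mem_unitaryGroup_iff'.mp hU
  set C : Matrix n n ℂ := star U * V with hC_def
  have hCs : Cᴴ = star V * U := by
    rw [hC_def, ← Matrix.star_eq_conjTranspose, Matrix.star_mul, star_star]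
  have hC1 : C * Cᴴ = 1 := by
    rw [hCs, hC_def, Matrix.mul_assoc, ← Matrix.mul_assoc V, hV1, Matrix.one_mul, hU2]
  have hC2 : Cᴴ * C = 1 := by
    rw [hCs, hC_def, Matrix.mul_assoc, ← Matrix.mul_assoc U, hU1, Matrix.one_mul, hV2]
  have hconj : star U * A * U = C * Matrix.diagonal (Complex.ofReal ∘ hA.eigenvalues) * Cᴴ := by
    conv_lhs => rw [hA.spectral_theorem]
    rw [hCs, hC_def]
    rw [Unitary.conjStarAlgAut_apply]
    simp only [Matrix.mul_assoc]
    rfl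
  refine ⟨fun i k => Complex.normSq (C i k), fun i k => Complex.normSq_nonneg _,
    fun i => unitary_row_sum hC1 i, fun k => unitary_col_sum hC2 k, fun i => ?_⟩
  rw [pdiag, hconj, conj_diag_entry]
  simp only [Complex.ofReal_re]

lemma pdiag_nonneg {A : Matrix n n ℂ} (hA : A.PosSemidef) {U : Matrix n n ℂ}
    (hU : U ∈ Matrix.unitaryGroup n ℂ) (i : n) : 0 ≤ pdiag A U i := by
  obtain ⟨w, hw0, _, _, hrep⟩ := pdiag_repr hA.1 hU
  rw [hrep i]
  exact Finset.sum_nonneg fun k _ => mul_nonneg (hA.eigenvalues_nonneg k) (hw0 i k)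

lemma pdiag_sum {A : Matrix n n ℂ} (hA : A.IsHermitian) {U : Matrix n n ℂ}
    (hU : U ∈ Matrix.unitaryGroup n ℂ) :
    ∑ i, pdiag A U i = ∑ k, hA.eigenvalues k := by
  obtain ⟨w, hw0, hrow, hcol, hrep⟩ := pdiag_repr hA hU
  rw [Finset.sum_congr rfl fun i _ => hrep i, Finset.sum_comm]
  refine Finset.sum_congr rfl fun k _ => ?_
  rw [← Finset.mul_sum, hcol k, mul_one]

lemma pdiag_abs_sum_le {A : Matrix n n ℂ} (hA : A.IsHermitian) {U : Matrix n n ℂ}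
    (hU : U ∈ Matrix.unitaryGroup n ℂ) :
    ∑ i, |pdiag A U i| ≤ ∑ k, |hA.eigenvalues k| := by
  obtain ⟨w, hw0, hrow, hcol, hrep⟩ := pdiag_repr hA hU
  calc ∑ i, |pdiag A U i| ≤ ∑ i, ∑ k, |hA.eigenvalues k| * w i k := by
        refine Finset.sum_le_sum fun i _ => ?_
        rw [hrep i]
        refine (Finset.abs_sum_le_sum_abs _ _).trans ?_
        refine Finset.sum_le_sum fun k _ => ?_
        rw [abs_mul, abs_of_nonneg (hw0 i k)]
    _ = ∑ k, |hA.eigenvalues k| := by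
        rw [Finset.sum_comm]
        refine Finset.sum_congr rfl fun k _ => ?_
        rw [← Finset.mul_sum, hcol k, mul_one]

/-- Schur-style concavity: vN entropy of eigenvalues is at most the entropy of
the diagonal in any orthonormal basis. -/
lemma jensen_pdiag {A : Matrix n n ℂ} (hA : A.PosSemidef) {U : Matrix n n ℂ}
    (hU : U ∈ Matrix.unitaryGroup n ℂ) :
    ∑ k, Real.negMulLog (hA.1.eigenvalues k) ≤ ∑ i, Real.negMulLog (pdiag A U i) := by
  obtain ⟨w, hw0, hrow, hcol, hrep⟩ := pdiag_repr hA.1 hU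
  calc ∑ k, Real.negMulLog (hA.1.eigenvalues k)
      = ∑ k, ∑ i, w i k * Real.negMulLog (hA.1.eigenvalues k) := by
        refine Finset.sum_congr rfl fun k _ => ?_
        rw [← Finset.sum_mul, hcol k, one_mul]
    _ = ∑ i, ∑ k, w i k * Real.negMulLog (hA.1.eigenvalues k) := Finset.sum_comm
    _ ≤ ∑ i, Real.negMulLog (pdiag A U i) := by
        refine Finset.sum_le_sum fun i _ => ?_
        have := Real.concaveOn_negMulLog.le_map_sum (fun k _ => hw0 i k) (hrow i)
          (fun k _ => Set.mem_Ici.mpr (hA.eigenvalues_nonneg k))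
        rw [hrep i]
        simp only [smul_eq_mul] at this
        refine this.trans_eq ?_
        congr 1
        exact Finset.sum_congr rfl fun k _ => mul_comm _ _

lemma trace_conj_diag (V : Matrix n n ℂ) (hV : star V * V = 1) (f : n → ℂ) :
    (V * Matrix.diagonal f * star V).trace = ∑ k, f k := by
  rw [Matrix.trace_mul_cycle, hV, Matrix.one_mul, Matrix.trace_diagonal]

lemma sum_eigenvalues_eq_trace {A : Matrix n n ℂ} (hA : A.IsHermitian) :
    (Complex.ofReal (∑ k, hA.eigenvalues k)) = A.trace := by
  conv_rhs => rw [hA.spectral_theorem]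
  rw [Unitary.conjStarAlgAut_apply]
  rw [trace_conj_diag _ (Matrix.mem_unitaryGroup_iff'.mp hA.eigenvectorUnitary.2)]
  push_cast
  rfl

lemma pdiag_self {A : Matrix n n ℂ} (hA : A.IsHermitian) (i : n) :
    pdiag A (hA.eigenvectorUnitary : Matrix n n ℂ) i = hA.eigenvalues i := by
  have h := hA.conjStarAlgAut_star_eigenvectorUnitary
  rw [Unitary.conjStarAlgAut_apply, Unitary.coe_star, star_star] at h
  rw [pdiag, h]
  simp [Matrix.diagonal_apply_eq]

/-! ### Trace norm -/

open scoped MatrixOrder in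
lemma trNorm_eq_sum_abs {X : Matrix n n ℂ} (hX : X.IsHermitian) :
    QRelay.trNorm X = ∑ k, |hX.eigenvalues k| := by
  set hP := Matrix.posSemidef_conjTranspose_mul_self X with hP_def
  set V : Matrix n n ℂ := (hX.eigenvectorUnitary : Matrix n n ℂ) with hV_def
  have hV1 : V * star V = 1 := Matrix.mem_unitaryGroup_iff.mp hX.eigenvectorUnitary.2
  have hV2 : star V * V = 1 := Matrix.mem_unitaryGroup_iff'.mp hX.eigenvectorUnitary.2
  set S : Matrix n n ℂ :=
    V * Matrix.diagonal (Complex.ofReal ∘ fun k => |hX.eigenvalues k|) * star V with hS_def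
  have hSpsd : S.PosSemidef := by
    rw [hS_def, Matrix.star_eq_conjTranspose]
    exact (Matrix.posSemidef_diagonal_iff.mpr fun k => by
      simp only [Function.comp_apply]
      exact_mod_cast Complex.zero_le_real.mpr (abs_nonneg _)).mul_mul_conjTranspose_same V
  have hprod : ∀ f g : n → ℝ,
      (V * Matrix.diagonal (Complex.ofReal ∘ f) * star V) *
        (V * Matrix.diagonal (Complex.ofReal ∘ g) * star V)
      = V * Matrix.diagonal (Complex.ofReal ∘ fun k => f k * g k) * star V := by
    intro f g
    calc (V * Matrix.diagonal (Complex.ofReal ∘ f) * star V) *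
        (V * Matrix.diagonal (Complex.ofReal ∘ g) * star V)
        = V * (Matrix.diagonal (Complex.ofReal ∘ f) *
            ((star V * V) * (Matrix.diagonal (Complex.ofReal ∘ g) * star V))) := by
          simp only [Matrix.mul_assoc]
      _ = V * Matrix.diagonal (Complex.ofReal ∘ fun k => f k * g k) * star V := by
          rw [hV2, Matrix.one_mul, ← Matrix.mul_assoc, ← Matrix.mul_assoc,
            Matrix.mul_assoc V, Matrix.diagonal_mul_diagonal]
          simp only [Function.comp_apply, Function.comp_def, ← Complex.ofReal_mul]
  have hspec : X = V * Matrix.diagonal (Complex.ofReal ∘ hX.eigenvalues) * star V :=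
    hX.spectral_theorem
  have hsq : S ^ 2 = Xᴴ * X :=
    calc S ^ 2 = V * Matrix.diagonal (Complex.ofReal ∘ fun k =>
          |hX.eigenvalues k| * |hX.eigenvalues k|) * star V := by
          rw [pow_two, hS_def, hprod]
      _ = V * Matrix.diagonal (Complex.ofReal ∘ fun k =>
          hX.eigenvalues k * hX.eigenvalues k) * star V := by
          congr 2
          funext k
          simp only [Function.comp_apply, abs_mul_abs_self]
      _ = (V * Matrix.diagonal (Complex.ofReal ∘ hX.eigenvalues) * star V) *
          (V * Matrix.diagonal (Complex.ofReal ∘ hX.eigenvalues) * star V) := by rw [hprod]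
      _ = X * X := by rw [← hspec]
      _ = Xᴴ * X := by rw [hX.eq]
  have hS_eq : S = CFC.sqrt (Xᴴ * X) :=
    ((CFC.sqrt_eq_iff _ _ hP.nonneg hSpsd.nonneg).mpr (by rw [← pow_two]; exact hsq)).symm
  have htr1 : S.trace = Complex.ofReal (∑ k, |hX.eigenvalues k|) := by
    rw [hS_def, trace_conj_diag _ hV2]
    push_cast
    rfl
  have htr2 : (CFC.sqrt (Xᴴ * X)).trace
      = Complex.ofReal (∑ k, Real.sqrt (hP.1.eigenvalues k)) := by
    rw [CFC.sqrt_eq_cfc, cfc_nnreal_eq_real _ _ hP.nonneg, hP.1.cfc_eq, Matrix.IsHermitian.cfc,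
      Unitary.conjStarAlgAut_apply]
    rw [trace_conj_diag _
      (Matrix.mem_unitaryGroup_iff'.mp hP.1.eigenvectorUnitary.2)]
    push_cast
    refine Finset.sum_congr rfl fun k _ => ?_
    simp [max_eq_left (hP.eigenvalues_nonneg k)]
  have : Complex.ofReal (∑ k, Real.sqrt (hP.1.eigenvalues k))
      = Complex.ofReal (∑ k, |hX.eigenvalues k|) := by
    rw [← htr1, ← htr2, hS_eq]
  have h2 := Complex.ofReal_injective this
  unfold QRelay.trNorm
  exact h2

lemma trNorm_congr {X Y : Matrix n n ℂ} (h : Xᴴ * X = Yᴴ * Y) :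
    QRelay.trNorm X = QRelay.trNorm Y := by
  have key : ∀ (M N : Matrix n n ℂ) (hM : M.PosSemidef) (hN : N.PosSemidef), M = N →
      ∀ i, hM.1.eigenvalues i = hN.1.eigenvalues i := by
    rintro M N hM hN rfl i
    rfl
  unfold QRelay.trNorm
  exact Finset.sum_congr rfl fun i _ => by
    rw [key _ _ (Matrix.posSemidef_conjTranspose_mul_self X)
      (Matrix.posSemidef_conjTranspose_mul_self Y) h i]

/-! ### One-sided quantum bound -/

lemma onesided (ρ σ : Matrix n n ℂ) (hρ : ρ.PosSemidef) (hρ1 : ρ.trace = 1)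
    (hσ : σ.PosSemidef) (hσ1 : σ.trace = 1) (hΔ : (ρ - σ).IsHermitian) {ε : ℝ}
    (hd : ∑ k, |hΔ.eigenvalues k| ≤ 2 * ε) (hε1 : ε ≤ 1) :
    ∑ k, Real.negMulLog (hρ.1.eigenvalues k) - ∑ k, Real.negMulLog (hσ.1.eigenvalues k)
      ≤ ε * Real.log (Fintype.card n)
        + (Real.negMulLog ε + Real.negMulLog (1 - ε)) := by
  set U : Matrix n n ℂ := (hσ.1.eigenvectorUnitary : Matrix n n ℂ) with hU_def
  have hU : U ∈ Matrix.unitaryGroup n ℂ := hσ.1.eigenvectorUnitary.2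
  set p := pdiag ρ U with hp_def
  set q := hσ.1.eigenvalues with hq_def
  have hqd : ∀ i, pdiag σ U i = q i := fun i => pdiag_self hσ.1 i
  have hp0 : ∀ i, 0 ≤ p i := fun i => pdiag_nonneg hρ hU i
  have hq0 : ∀ i, 0 ≤ q i := fun i => hσ.eigenvalues_nonneg i
  have hρsum : ∑ k, hρ.1.eigenvalues k = 1 := by
    have := sum_eigenvalues_eq_trace hρ.1
    rw [hρ1] at this
    exact_mod_cast this
  have hσsum : ∑ k, q k = 1 := by
    have := sum_eigenvalues_eq_trace hσ.1
    rw [hσ1] at this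
    exact_mod_cast this
  have hp1 : ∑ i, p i = 1 := by
    rw [hp_def, pdiag_sum hρ.1 hU, hρsum]
  have hdiff : ∀ i, p i - q i = pdiag (ρ - σ) U i := by
    intro i
    rw [pdiag_sub, hqd i]
  have htv : ∑ i, |p i - q i| ≤ 2 * ε := by
    calc ∑ i, |p i - q i| = ∑ i, |pdiag (ρ - σ) U i| :=
          Finset.sum_congr rfl fun i _ => by rw [hdiff i]
      _ ≤ ∑ k, |hΔ.eigenvalues k| := pdiag_abs_sum_le hΔ hU
      _ ≤ 2 * ε := hd
  have hkey := classical_key hp0 hp1 hq0 hσsum htv hε1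
  have hjen : ∑ k, Real.negMulLog (hρ.1.eigenvalues k) ≤ ∑ i, Real.negMulLog (p i) :=
    jensen_pdiag hρ hU
  linarith

end FAx

open QRelay in
/-- Fannes–Audenaert continuity bound for the von Neumann entropy:
if `(1/2)‖ρ - σ‖₁ ≤ ε ≤ 1` on a space of dimension `d`, then
`|H(ρ) - H(σ)| ≤ ε log d + h(ε)`. -/
theorem fannes_audenaert
    {n : Type*} [Fintype n] [DecidableEq n]
    (ρ σ : Matrix n n ℂ) (hρ : IsDensity ρ) (hσ : IsDensity σ)
    (ε : ℝ) (hε : (1 / 2) * trNorm (ρ - σ) ≤ ε) (hε1 : ε ≤ 1) :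
    |vN ρ - vN σ| ≤ ε * Real.logb 2 (Fintype.card n) + binEnt ε := by
  obtain ⟨hρp, hρ1⟩ := hρ
  obtain ⟨hσp, hσ1⟩ := hσ
  have hΔ : (ρ - σ).IsHermitian := hρp.1.sub hσp.1
  have hΔ' : (σ - ρ).IsHermitian := hσp.1.sub hρp.1
  have hL : (0:ℝ) < Real.log 2 := Real.log_pos one_lt_two
  -- trace norm facts
  have htn : ∑ k, |hΔ.eigenvalues k| ≤ 2 * ε := by
    have := FAx.trNorm_eq_sum_abs hΔ
    rw [← this]
    linarith
  have htn' : ∑ k, |hΔ'.eigenvalues k| ≤ 2 * ε := by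
    have hc : QRelay.trNorm (σ - ρ) = QRelay.trNorm (ρ - σ) := by
      refine FAx.trNorm_congr ?_
      rw [show σ - ρ = -(ρ - σ) from (neg_sub ρ σ).symm, Matrix.conjTranspose_neg,
        Matrix.neg_mul, Matrix.mul_neg, neg_neg]
    have := FAx.trNorm_eq_sum_abs hΔ'
    rw [← this, hc]
    linarith
  have h1 := FAx.onesided ρ σ hρp hρ1 hσp hσ1 hΔ htn hε1
  have h2 := FAx.onesided σ ρ hσp hσ1 hρp hρ1 hΔ' htn' hε1
  -- convert to base-2 quantities
  have hvN : ∀ (A : Matrix n n ℂ) (hA : A.PosSemidef),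
      vN A = (∑ k, Real.negMulLog (hA.1.eigenvalues k)) / Real.log 2 := by
    intro A hA
    rw [vN, dif_pos hA.1, Finset.sum_div, ← Finset.sum_neg_distrib]
    refine Finset.sum_congr rfl fun k _ => ?_
    rw [Real.logb, Real.negMulLog]
    ring
  have hbin : binEnt ε = (Real.negMulLog ε + Real.negMulLog (1 - ε)) / Real.log 2 := by
    simp only [binEnt, Real.logb, Real.negMulLog]
    ring
  have hlogd : ε * Real.logb 2 (Fintype.card n) = (ε * Real.log (Fintype.card n)) / Real.log 2 := by
    rw [Real.logb]
    ring
  rw [hvN ρ hρp, hvN σ hσp, div_sub_div_same, hbin, hlogd, abs_div, abs_of_pos hL,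
    ← add_div]
  rw [div_le_div_iff_of_pos_right hL]
  rw [abs_sub_le_iff]
  constructor
  · linarith
  · linarith
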